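/- arXiv:1609.05018 — 2 statements merged into one kernel-verified Lean document; each statement's English description precedes it below -/
import Mathlib

section
/- Let k ≥ 2, let g ∈ ℂ with |arg g| ≤ (k−1)π/(4k), and let y ∈ ℂ be nonzero with Re y ≤ 0. Then for either square root w of y, the argument of g·w lies in [π/(4k), π − π/(4k)] ∪ [−π + π/(4k), −π/(4k)], and consequently |1 ± g·w| ≥ sin(π/(4k)). -/
set_option maxHeartbeats 1000000


open Real Complex

lemma aux_abs_arg_sqrt {w : ℂ} (hw : w ≠ 0) (h : w.re ^ 2 ≤ w.im ^ 2) :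
    Real.pi / 4 ≤ |w.arg| ∧ |w.arg| ≤ 3 * Real.pi / 4 := by
  have habs : (0:ℝ) < ‖w‖ := norm_pos_iff.mpr hw
  have hcos : Real.cos w.arg = w.re / ‖w‖ := Complex.cos_arg hw
  have hsin : Real.sin w.arg = w.im / ‖w‖ := Complex.sin_arg w
  have hcs : Real.cos w.arg ^ 2 ≤ Real.sin w.arg ^ 2 := by
    rw [hcos, hsin, div_pow, div_pow]
    exact div_le_div_of_nonneg_right h (by positivity) |>.trans_eq rfl
  have h2 : Real.cos (2 * w.arg) ≤ 0 := by
    rw [Real.cos_two_mul']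
    linarith
  have hpi := Real.pi_pos
  have hle := Complex.abs_arg_le_pi w
  constructor
  · by_contra hcon
    push_neg at hcon
    have : 0 < Real.cos (2 * |w.arg|) := by
      apply Real.cos_pos_of_mem_Ioo
      constructor <;> [nlinarith [abs_nonneg w.arg]; nlinarith [abs_nonneg w.arg]]
    rcases abs_cases w.arg with ⟨he, _⟩ | ⟨he, _⟩
    · rw [he] at this; linarith
    · rw [he, mul_neg, Real.cos_neg] at this; linarith
  · by_contra hcon
    push_neg at hcon
    have h2a : 0 < Real.cos (2 * |w.arg| - 2 * Real.pi) := by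
      apply Real.cos_pos_of_mem_Ioo
      constructor <;> nlinarith
    rw [Real.cos_sub_two_pi] at h2a
    rcases abs_cases w.arg with ⟨he, _⟩ | ⟨he, _⟩
    · rw [he] at h2a; linarith
    · rw [he, mul_neg, Real.cos_neg] at h2a; linarith

/-- for `k ≥ 2`, `g ≠ 0` with `|arg g| ≤ (k−1)π/(4k)` and `y ≠ 0` with
`Re y ≤ 0`, for either square root `w` of `y` the argument of `g·w` lies in
`[π/(4k), π − π/(4k)] ∪ [−π + π/(4k), −π/(4k)]`, and `|1 ± g·w| ≥ sin(π/(4k))`. -/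
theorem arg_g_sqrt_and_dist_bound (k : ℕ) (hk : 2 ≤ k) (g : ℂ) (hg : g ≠ 0)
    (harg : |g.arg| ≤ (k - 1) * Real.pi / (4 * k))
    (y w : ℂ) (hy : y ≠ 0) (hre : y.re ≤ 0) (hw : w ^ 2 = y) :
    ((Real.pi / (4 * k) ≤ (g * w).arg ∧ (g * w).arg ≤ Real.pi - Real.pi / (4 * k)) ∨
      (-(Real.pi - Real.pi / (4 * k)) ≤ (g * w).arg ∧ (g * w).arg ≤ -(Real.pi / (4 * k)))) ∧
    (∀ s : ℂ, s = 1 ∨ s = -1 → Real.sin (Real.pi / (4 * k)) ≤ ‖1 + s * (g * w)‖) := by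
  have hk2 : (2:ℝ) ≤ (k:ℝ) := by exact_mod_cast hk
  have hkpos : (0:ℝ) < (k:ℝ) := by linarith
  have hpi := Real.pi_pos
  set α := Real.pi / (4 * k) with hα
  have hαpos : 0 < α := by positivity
  have hβ : (k - 1 : ℝ) * Real.pi / (4 * k) = Real.pi / 4 - α := by
    rw [hα]; field_simp
  have hαle : α ≤ Real.pi / 8 := by
    rw [hα, div_le_div_iff₀ (by positivity) (by norm_num)]
    nlinarith
  -- w ≠ 0
  have hw0 : w ≠ 0 := by
    intro h; rw [h] at hw; simp at hw; exact hy hw.symm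
  -- re² ≤ im²
  have hre2 : w.re ^ 2 ≤ w.im ^ 2 := by
    have : (w ^ 2).re = w.re ^ 2 - w.im ^ 2 := by
      rw [sq w]; simp [Complex.mul_re]; ring
    rw [hw] at this
    nlinarith
  obtain ⟨hw1, hw2⟩ := aux_abs_arg_sqrt hw0 hre2
  rw [hβ] at harg
  have hg1 : -(Real.pi / 4 - α) ≤ g.arg := neg_le_of_abs_le harg
  have hg2 : g.arg ≤ Real.pi / 4 - α := le_of_abs_le harg
  -- argument of g*w
  have hargmul : (g * w).arg = g.arg + w.arg := by
    apply Complex.arg_mul hg hw0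
    simp only [Set.mem_Ioc]
    rcases abs_cases w.arg with ⟨he, _⟩ | ⟨he, _⟩ <;> constructor <;> nlinarith
  have hmain : ((α ≤ (g * w).arg ∧ (g * w).arg ≤ Real.pi - α) ∨
      (-(Real.pi - α) ≤ (g * w).arg ∧ (g * w).arg ≤ -α)) := by
    rcases abs_cases w.arg with ⟨he, _⟩ | ⟨he, _⟩
    · left; rw [hargmul]; constructor <;> nlinarith
    · right; rw [hargmul]; constructor <;> nlinarith
  refine ⟨hmain, ?_⟩
  -- second part
  intro s hs
  set z := g * w with hz
  have hz0 : z ≠ 0 := mul_ne_zero hg hw0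
  have habs : (0:ℝ) < ‖z‖ := norm_pos_iff.mpr hz0
  set r := ‖z‖ with hr
  have hcosz : Real.cos z.arg = z.re / r := Complex.cos_arg hz0
  have hrez : z.re = r * Real.cos z.arg := by
    rw [hcosz]; field_simp
  -- |cos (arg z)| ≤ cos α
  have hαpi : α ≤ Real.pi / 2 := by linarith
  have hcosb : |Real.cos z.arg| ≤ Real.cos α := by
    rw [abs_le]
    rcases hmain with ⟨h1, h2⟩ | ⟨h1, h2⟩
    · constructor
      · have := Real.cos_le_cos_of_nonneg_of_le_pi (by linarith) (by linarith) h2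
        rw [Real.cos_pi_sub] at this; linarith
      · exact Real.cos_le_cos_of_nonneg_of_le_pi (le_of_lt hαpos) (by linarith) h1
    · rw [← Real.cos_neg z.arg]
      constructor
      · have := Real.cos_le_cos_of_nonneg_of_le_pi (by linarith) (by linarith)
          (show -z.arg ≤ Real.pi - α by linarith)
        rw [Real.cos_pi_sub] at this; linarith
      · exact Real.cos_le_cos_of_nonneg_of_le_pi (le_of_lt hαpos) (by linarith) (by linarith)
  have hreb : |z.re| ≤ r * Real.cos α := by
    rw [hrez, abs_mul, abs_of_pos habs]
    exact mul_le_mul_of_nonneg_left hcosb (le_of_lt habs)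
  -- now the norm bound
  have hsin1 : Real.sin α ≤ 1 := Real.sin_le_one α
  have hsin0 : 0 ≤ Real.sin α := Real.sin_nonneg_of_nonneg_of_le_pi (le_of_lt hαpos) (by linarith)
  have hcs1 : Real.sin α ^ 2 + Real.cos α ^ 2 = 1 := Real.sin_sq_add_cos_sq α
  have hnorm : ‖1 + s * z‖ ^ 2 = 1 + 2 * (s * z).re + r ^ 2 := by
    have h1 : ‖1 + s * z‖ ^ 2 = (1 + (s*z).re)^2 + (s*z).im^2 := by
      rw [Complex.sq_norm, Complex.normSq_apply]
      simp [Complex.add_re, Complex.add_im]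
      ring
    have hns : Complex.normSq (s * z) = Complex.normSq z := by
      rcases hs with h | h <;> simp [h]
    have h2 : (s*z).re^2 + (s*z).im^2 = r^2 := by
      calc (s*z).re^2 + (s*z).im^2 = Complex.normSq (s*z) := by
            rw [Complex.normSq_apply]; ring
        _ = Complex.normSq z := hns
        _ = r^2 := by rw [hr, ← Complex.sq_norm]
    rw [h1]; nlinarith [h2]
  have hszre : -(r * Real.cos α) ≤ (s * z).re := by
    rcases hs with h | h <;> simp [h] <;> cases abs_cases z.re with
      | inl hc => linarith [hreb]
      | inr hc => linarith [hreb]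
  have key : Real.sin α ^ 2 ≤ ‖1 + s * z‖ ^ 2 := by
    rw [hnorm]
    nlinarith [sq_nonneg (r - Real.cos α)]
  nlinarith [norm_nonneg (1 + s * z), key]
end

section
/- Let k ≥ 2, N ≥ 1, and let H be an N×N Hermitian matrix, B an N×N complex matrix, η ∈ {0,1}, and 𝕄 the (k+1)N×(k+1)N bordered block matrix such that det((1−x)𝟙 − g𝕄) = (1−x)^{(k−1)N} det((1−x)²𝟙_N − g²(iH − ηBB†)). If g ∈ ℂ satisfies |arg(g)| ≤ (k−1)π/(4k), then every eigenvalue of 𝟙_{(k+1)N} − g𝕄 has modulus at least sin(π/(4k)); in particular 𝟙 − g𝕄 is invertible. -/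
open Matrix Real

lemma lemA (a t : ℂ) (s c : ℝ) (hs : 0 ≤ s) (hc : 0 ≤ c) (hsc : s^2 + c^2 = 1)
    (ha : ‖a‖ * s ≤ a.re) (ht : t.re ≤ 0) :
    (a*t).re ≤ ‖a*t‖ * c := by
  have h1 : a.re^2 + a.im^2 = (‖a‖)^2 := by
    rw [Complex.sq_norm, Complex.normSq_apply]; ring
  have h2 : t.re^2 + t.im^2 = (‖t‖)^2 := by
    rw [Complex.sq_norm, Complex.normSq_apply]; ring
  have hat : ‖a*t‖ = ‖a‖ * ‖t‖ := norm_mul _ _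
  have ha0 : 0 ≤ ‖a‖ := norm_nonneg a
  have ht0 : 0 ≤ ‖t‖ := norm_nonneg t
  have hre_nonneg : 0 ≤ a.re := le_trans (mul_nonneg ha0 hs) ha
  have hsq : (‖a‖ * s)^2 ≤ a.re^2 := by nlinarith [mul_nonneg ha0 hs]
  have him : |a.im| ≤ c * ‖a‖ := by
    nlinarith [abs_nonneg a.im, sq_abs a.im, mul_nonneg hc ha0]
  have htim : |t.im| ≤ ‖t‖ := Complex.abs_im_le_norm t
  have hmm : -(a.im * t.im) ≤ (c * ‖a‖) * ‖t‖ := by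
    calc -(a.im * t.im) ≤ |a.im * t.im| := neg_le_abs _
      _ = |a.im| * |t.im| := abs_mul _ _
      _ ≤ (c * ‖a‖) * ‖t‖ :=
        mul_le_mul him htim (abs_nonneg _) (mul_nonneg hc ha0)
  have hrr : a.re * t.re ≤ 0 := mul_nonpos_of_nonneg_of_nonpos hre_nonneg ht
  rw [Complex.mul_re, hat]
  nlinarith [hmm, hrr]

lemma lemB (k : ℕ) (hk : 2 ≤ k) (g : ℂ) (hg : g ≠ 0)
    (harg : |g.arg| ≤ ((k:ℝ) - 1) * Real.pi / (4 * k)) :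
    ‖g^2‖ * Real.sin (Real.pi/(2*k)) ≤ (g^2).re := by
  have hk2 : (2:ℝ) ≤ (k:ℝ) := by exact_mod_cast hk
  have hgpos : 0 < ‖g‖ := norm_pos_iff.mpr hg
  have hre : g.re = ‖g‖ * Real.cos g.arg := by
    rw [Complex.cos_arg hg]; field_simp
  have him : g.im = ‖g‖ * Real.sin g.arg := by
    rw [Complex.sin_arg]; field_simp
  have hfrac : 0 < Real.pi/(2*(k:ℝ)) := by positivity
  have harg2 : |2 * g.arg| ≤ Real.pi/2 - Real.pi/(2*k) := by
    have h5 : ((k:ℝ) - 1) * Real.pi / (4 * k) * 2 = Real.pi/2 - Real.pi/(2*k) := by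
      field_simp; ring
    rw [abs_mul, abs_two]
    linarith [harg]
  have hcos := Real.cos_le_cos_of_nonneg_of_le_pi (abs_nonneg (2 * g.arg))
    (by linarith [Real.pi_pos] : Real.pi/2 - Real.pi/(2*k) ≤ Real.pi) harg2
  rw [Real.cos_abs, Real.cos_pi_div_two_sub] at hcos
  have hre2 : (g^2).re = (‖g‖)^2 * Real.cos (2 * g.arg) := by
    rw [Real.cos_two_mul', pow_two, Complex.mul_re, hre, him]; ring
  rw [hre2, norm_pow]
  nlinarith [sq_nonneg (‖g‖), hcos]

lemma dot_star_self {n : ℕ} (v : Fin n → ℂ) :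
    (star v ⬝ᵥ v) = ((∑ i, Complex.normSq (v i) : ℝ) : ℂ) := by
  push_cast
  simp [dotProduct, Complex.normSq_eq_conj_mul_self, Complex.star_def]

set_option maxHeartbeats 1600000 in
/-- if `𝕄` is the `(k+1)N × (k+1)N` bordered block matrix whose
characteristic polynomial factorizes through `iH − ηBB†` with `H` Hermitian and
`η ∈ {0,1}`, and `|arg g| ≤ (k−1)π/(4k)`, then every eigenvalue of `𝟙 − g𝕄` has
modulus at least `sin(π/(4k))`; in particular `𝟙 − g𝕄` is invertible. -/
theorem eigenvalues_one_sub_gM_lower_bound (k N : ℕ) (hk : 2 ≤ k) (hN : 1 ≤ N)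
    (H B : Matrix (Fin N) (Fin N) ℂ) (hH : H.IsHermitian) (η : ℝ) (hη : η = 0 ∨ η = 1)
    (𝕄 : Matrix (Fin N ⊕ Fin k × Fin N) (Fin N ⊕ Fin k × Fin N) ℂ)
    (g : ℂ) (harg : |g.arg| ≤ (k - 1) * Real.pi / (4 * k))
    (hdet : ∀ x : ℂ,
      ((1 - x) • (1 : Matrix (Fin N ⊕ Fin k × Fin N) (Fin N ⊕ Fin k × Fin N) ℂ)
          - g • 𝕄).det
        = (1 - x) ^ ((k - 1) * N) *
          ((1 - x) ^ 2 • (1 : Matrix (Fin N) (Fin N) ℂ)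
            - g ^ 2 • (Complex.I • H - (η : ℂ) • (B * Bᴴ))).det) :
    (∀ μ ∈ spectrum ℂ
        ((1 : Matrix (Fin N ⊕ Fin k × Fin N) (Fin N ⊕ Fin k × Fin N) ℂ) - g • 𝕄),
      Real.sin (Real.pi / (4 * k)) ≤ ‖μ‖) ∧
    IsUnit ((1 : Matrix (Fin N ⊕ Fin k × Fin N) (Fin N ⊕ Fin k × Fin N) ℂ) - g • 𝕄) := by
  have hk2 : (2:ℝ) ≤ (k:ℝ) := by exact_mod_cast hk
  set A : Matrix (Fin N) (Fin N) ℂ := Complex.I • H - (η : ℂ) • (B * Bᴴ) with hA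
  have hfrac4 : Real.pi/(4*(k:ℝ)) ≤ Real.pi/8 :=
    div_le_div_of_nonneg_left Real.pi_pos.le (by norm_num) (by linarith)
  have hfrac4pos : 0 < Real.pi/(4*(k:ℝ)) := by positivity
  have hs0 : 0 < Real.sin (Real.pi/(4*k)) :=
    Real.sin_pos_of_pos_of_lt_pi hfrac4pos (by linarith [Real.pi_pos])
  have main : ∀ μ ∈ spectrum ℂ
      ((1 : Matrix (Fin N ⊕ Fin k × Fin N) (Fin N ⊕ Fin k × Fin N) ℂ) - g • 𝕄),
      Real.sin (Real.pi / (4 * k)) ≤ ‖μ‖ := by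
    intro μ hμ
    by_cases hμ1 : μ = 1
    · subst hμ1
      rw [norm_one]
      exact Real.sin_le_one _
    rw [spectrum.mem_iff] at hμ
    have hdet0 : ((1 - μ) • (1 : Matrix (Fin N ⊕ Fin k × Fin N) (Fin N ⊕ Fin k × Fin N) ℂ)
        - g • 𝕄).det = 0 := by
      have heq : (1 - μ) • (1 : Matrix (Fin N ⊕ Fin k × Fin N) (Fin N ⊕ Fin k × Fin N) ℂ)
          - g • 𝕄
          = -(algebraMap ℂ (Matrix (Fin N ⊕ Fin k × Fin N) (Fin N ⊕ Fin k × Fin N) ℂ) μ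
            - (1 - g • 𝕄)) := by
        rw [Algebra.algebraMap_eq_smul_one]
        module
      have h0 : (algebraMap ℂ (Matrix (Fin N ⊕ Fin k × Fin N) (Fin N ⊕ Fin k × Fin N) ℂ) μ
          - (1 - g • 𝕄)).det = 0 := by
        by_contra h
        exact hμ ((Matrix.isUnit_iff_isUnit_det _).mpr (isUnit_iff_ne_zero.mpr h))
      rw [heq, Matrix.det_neg, h0, mul_zero]
    have h2 : (1 - μ) ^ ((k-1)*N) *
        ((1-μ)^2 • (1 : Matrix (Fin N) (Fin N) ℂ) - g^2 • A).det = 0 := by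
      rw [← hdet μ]; exact hdet0
    rcases mul_eq_zero.mp h2 with hcase | hcase
    · exfalso
      apply hμ1
      have hne : (k-1)*N ≠ 0 := Nat.mul_ne_zero (by omega) (by omega)
      have h1μ : 1 - μ = 0 := by
        exact pow_eq_zero_iff hne |>.mp hcase
      have : μ = 1 := by linear_combination -h1μ
      exact this
    · obtain ⟨v, hv0, hv⟩ := Matrix.exists_mulVec_eq_zero_iff.mpr hcase
      have hv' : (1-μ)^2 • v = g^2 • (A *ᵥ v) := by
        rw [Matrix.sub_mulVec, Matrix.smul_mulVec, Matrix.smul_mulVec,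
          Matrix.one_mulVec, sub_eq_zero] at hv
        exact hv
      set cR : ℝ := ∑ i, Complex.normSq (v i) with hcR
      have hcRpos : 0 < cR := by
        obtain ⟨i, hi⟩ := Function.ne_iff.mp hv0
        exact Finset.sum_pos' (fun j _ => Complex.normSq_nonneg _)
          ⟨i, Finset.mem_univ i, Complex.normSq_pos.mpr hi⟩
      have hcv : star v ⬝ᵥ v = (cR : ℂ) := dot_star_self v
      set t : ℂ := star v ⬝ᵥ (A *ᵥ v) with htdef
      have hwc : (1-μ)^2 * (cR:ℂ) = g^2 * t := by
        have h3 := congrArg (fun w => star v ⬝ᵥ w) hv'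
        simp only [dotProduct_smul, smul_eq_mul] at h3
        rw [hcv] at h3
        exact h3
      -- t has nonpositive real part
      have hh4 : star (star v ⬝ᵥ (H *ᵥ v)) = star v ⬝ᵥ (H *ᵥ v) := by
        calc star (star v ⬝ᵥ (H *ᵥ v)) = star (H *ᵥ v) ⬝ᵥ v := by
              rw [Matrix.star_dotProduct, star_star]
          _ = (star v ᵥ* Hᴴ) ⬝ᵥ v := by rw [Matrix.star_mulVec]
          _ = star v ⬝ᵥ (H *ᵥ v) := by rw [hH.eq, ← Matrix.dotProduct_mulVec]
      have hhim : (star v ⬝ᵥ (H *ᵥ v)).im = 0 := by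
        have := congrArg Complex.im hh4
        simp only [Complex.star_def, Complex.conj_im] at this
        linarith
      have hb : ∃ r : ℝ, 0 ≤ r ∧ star v ⬝ᵥ ((B * Bᴴ) *ᵥ v) = (r:ℂ) := by
        refine ⟨∑ i, Complex.normSq ((Bᴴ *ᵥ v) i),
          Finset.sum_nonneg fun i _ => Complex.normSq_nonneg _, ?_⟩
        have hbb : star v ⬝ᵥ ((B * Bᴴ) *ᵥ v) = star (Bᴴ *ᵥ v) ⬝ᵥ (Bᴴ *ᵥ v) := by
          rw [← Matrix.mulVec_mulVec, Matrix.dotProduct_mulVec, Matrix.star_mulVec,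
            Matrix.conjTranspose_conjTranspose]
        rw [hbb, dot_star_self]
      have hηnn : 0 ≤ η := by rcases hη with h|h <;> simp [h]
      have ht_re : t.re ≤ 0 := by
        obtain ⟨r, hr0, hbr⟩ := hb
        have htt : t = Complex.I * (star v ⬝ᵥ (H *ᵥ v)) - (η:ℂ) * (r:ℂ) := by
          rw [htdef, hA, Matrix.sub_mulVec, Matrix.smul_mulVec, Matrix.smul_mulVec,
            dotProduct_sub, dotProduct_smul, dotProduct_smul,
            smul_eq_mul, smul_eq_mul, hbr]
        rw [htt]
        simp only [Complex.sub_re, Complex.mul_re, Complex.I_re, Complex.I_im, hhim,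
          Complex.ofReal_re, Complex.ofReal_im, zero_mul, one_mul, mul_zero, sub_zero, zero_sub]
        nlinarith [mul_nonneg hηnn hr0]
      -- nonzero facts
      have hwne : (1-μ)^2 ≠ 0 := pow_ne_zero _ (sub_ne_zero.mpr (fun h => hμ1 h.symm))
      have hcRne : (cR:ℂ) ≠ 0 := Complex.ofReal_ne_zero.mpr hcRpos.ne'
      have hgne : g ≠ 0 := by
        rintro rfl
        apply hwne
        have : (1-μ)^2 * (cR:ℂ) = 0 := by rw [hwc]; ring
        exact (mul_eq_zero.mp this).resolve_right hcRne
      -- angles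
      have hfrac2 : 0 < Real.pi/(2*(k:ℝ)) := by positivity
      have hfrac2le : Real.pi/(2*(k:ℝ)) ≤ Real.pi/2 :=
        div_le_div_of_nonneg_left Real.pi_pos.le (by norm_num) (by linarith)
      have hs_nonneg : 0 ≤ Real.sin (Real.pi/(2*k)) :=
        Real.sin_nonneg_of_nonneg_of_le_pi hfrac2.le (by linarith [Real.pi_pos])
      have hc_nonneg : 0 ≤ Real.cos (Real.pi/(2*k)) :=
        Real.cos_nonneg_of_mem_Icc ⟨by linarith, hfrac2le⟩
      have hB2 := lemB k hk g hgne harg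
      have hAT := lemA (g^2) t (Real.sin (Real.pi/(2*k))) (Real.cos (Real.pi/(2*k)))
        hs_nonneg hc_nonneg (Real.sin_sq_add_cos_sq _) hB2 ht_re
      -- transfer to w = (1-μ)^2
      have hwre : ((1-μ)^2).re * cR ≤ (‖(1-μ)^2‖ * cR) * Real.cos (Real.pi/(2*k)) := by
        have e1 : ((1-μ)^2 * (cR:ℂ)).re = ((1-μ)^2).re * cR := by
          rw [Complex.mul_re, Complex.ofReal_re, Complex.ofReal_im, mul_zero, sub_zero]
        have e2 : ‖(1-μ)^2 * (cR:ℂ)‖ = ‖(1-μ)^2‖ * cR := by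
          rw [norm_mul, Complex.norm_of_nonneg hcRpos.le]
        rw [← e1, ← e2, hwc]
        exact hAT
      have hkey : ((1-μ)^2).re ≤ ‖(1-μ)^2‖ * Real.cos (Real.pi/(2*k)) := by
        nlinarith [hwre, hcRpos]
      -- unfold to components
      have h_re : ((1-μ)^2).re = (1 - μ.re)^2 - μ.im^2 := by
        rw [pow_two, Complex.mul_re]
        simp [Complex.sub_re, Complex.sub_im, Complex.one_re, Complex.one_im]
        ring
      have h_abs : ‖(1-μ)^2‖ = (1 - μ.re)^2 + μ.im^2 := by
        rw [norm_pow, Complex.sq_norm, Complex.normSq_apply]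
        simp [Complex.sub_re, Complex.sub_im, Complex.one_re, Complex.one_im]
        ring
      rw [h_re, h_abs] at hkey
      -- half angle
      have hhalf : Real.cos (Real.pi/(2*k)) = 2 * Real.cos (Real.pi/(4*k))^2 - 1 := by
        have := Real.cos_sq (Real.pi/(4*k))
        have h24 : 2 * (Real.pi/(4*(k:ℝ))) = Real.pi/(2*k) := by
          field_simp; ring
        rw [h24] at this
        linarith
      have hc0pos : 0 < Real.cos (Real.pi/(4*k)) :=
        Real.cos_pos_of_mem_Ioo ⟨by linarith [Real.pi_pos], by linarith [Real.pi_pos]⟩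
      have hsc0 : Real.sin (Real.pi/(4*k))^2 + Real.cos (Real.pi/(4*k))^2 = 1 :=
        Real.sin_sq_add_cos_sq _
      have hnorm : ‖μ‖^2 = μ.re^2 + μ.im^2 := by
        rw [Complex.sq_norm, Complex.normSq_apply]; ring
      have hsq : Real.sin (Real.pi/(4*k))^2 ≤ ‖μ‖^2 := by
        rw [hnorm]
        rw [hhalf] at hkey
        nlinarith [hkey, hsc0, sq_nonneg ((1 - μ.re) - Real.cos (Real.pi/(4*k))^2),
          mul_pos hc0pos hc0pos, sq_nonneg μ.im]
      nlinarith [hsq, norm_nonneg μ, hs0]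
  refine ⟨main, ?_⟩
  by_contra hcon
  have h0 := main 0 (spectrum.zero_mem ℂ hcon)
  rw [norm_zero] at h0
  linarith
end
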